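/- Let I ⊆ ℝ be an open interval and let u : ℝ → ℝ be three times differentiable on I with u′(x) ≠ 0 and 2·u′(x)·u‴(x) − 3·u″(x)² − 2·u(x)·u′(x)⁴ = 0 for all x ∈ I. Let Ψ₁, Ψ₂ : ℝ → ℝ be twice differentiable with Ψᵢ″(y) = (1/2)·y·Ψᵢ(y) for all y ∈ ℝ (i = 1,2). If u″(x)·Ψ₂(u(x)) − 2·u′(x)²·Ψ₂′(u(x)) ≠ 0 for all x ∈ I, then the function I₁(x) := (u″(x)·Ψ₁(u(x)) − 2·u′(x)²·Ψ₁′(u(x)))/(u″(x)·Ψ₂(u(x)) − 2·u′(x)²·Ψ₂′(u(x))) has derivative zero at every x ∈ I. Likewise, if (x·u″(x)+2·u′(x))·Ψ₂(u(x)) − 2·x·u′(x)²·Ψ₂′(u(x)) ≠ 0 for all x ∈ I, then I₂(x) := ((x·u″(x)+2·u′(x))·Ψ₁(u(x)) − 2·x·u′(x)²·Ψ₁′(u(x)))/((x·u″(x)+2·u′(x))·Ψ₂(u(x)) − 2·x·u′(x)²·Ψ₂′(u(x))) has derivative zero at every x ∈ I. (The functions I₁, I₂ of (6.10) are first integrals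 of equation (6.1) of the paper.) -/

import Mathlib

/-- If `f' = c f`, `g' = c g` at `x` and `g x ≠ 0`, then `(f/g)' x = 0`. -/
lemma div_deriv_zero {f g : ℝ → ℝ} {x c : ℝ}
    (hf : HasDerivAt f (c * f x) x) (hg : HasDerivAt g (c * g x) x)
    (hgx : g x ≠ 0) : deriv (fun x => f x / g x) x = 0 := by
  have := (hf.div hg hgx).deriv
  show deriv (f / g) x = 0
  rw [this]; field_simp; ring

lemma N_deriv {u Ψ : ℝ → ℝ} {x : ℝ}
    (hu1 : DifferentiableAt ℝ u x) (hu2 : DifferentiableAt ℝ (deriv u) x)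
    (hu3 : DifferentiableAt ℝ (deriv (deriv u)) x)
    (hΨ1 : ∀ y : ℝ, DifferentiableAt ℝ Ψ y)
    (hΨ2 : ∀ y : ℝ, DifferentiableAt ℝ (deriv Ψ) y)
    (hairy : ∀ y : ℝ, deriv (deriv Ψ) y = (1 / 2) * y * Ψ y) :
    HasDerivAt (fun x => deriv (deriv u) x * Ψ (u x) - 2 * (deriv u x) ^ 2 * deriv Ψ (u x))
      (deriv (deriv (deriv u)) x * Ψ (u x)
        + deriv (deriv u) x * (deriv Ψ (u x) * deriv u x)
        - (2 * (2 * deriv u x ^ 1 * deriv (deriv u) x) * deriv Ψ (u x)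
          + 2 * (deriv u x) ^ 2 * ((1 / 2) * u x * Ψ (u x) * deriv u x))) x := by
  have hu : HasDerivAt u (deriv u x) x := hu1.hasDerivAt
  have hΨu : HasDerivAt (fun x => Ψ (u x)) (deriv Ψ (u x) * deriv u x) x :=
    (hΨ1 (u x)).hasDerivAt.comp x hu
  have hΨ'u : HasDerivAt (fun x => deriv Ψ (u x)) ((1 / 2) * u x * Ψ (u x) * deriv u x) x := by
    have := (hΨ2 (u x)).hasDerivAt.comp x hu
    rwa [hairy] at this
  exact ((hu3.hasDerivAt.mul hΨu).sub
    (((hu2.hasDerivAt.pow 2).const_mul 2).mul hΨ'u))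

lemma M_deriv {u Ψ : ℝ → ℝ} {x : ℝ}
    (hu1 : DifferentiableAt ℝ u x) (hu2 : DifferentiableAt ℝ (deriv u) x)
    (hu3 : DifferentiableAt ℝ (deriv (deriv u)) x)
    (hΨ1 : ∀ y : ℝ, DifferentiableAt ℝ Ψ y)
    (hΨ2 : ∀ y : ℝ, DifferentiableAt ℝ (deriv Ψ) y)
    (hairy : ∀ y : ℝ, deriv (deriv Ψ) y = (1 / 2) * y * Ψ y) :
    HasDerivAt (fun x => (x * deriv (deriv u) x + 2 * deriv u x) * Ψ (u x)
        - 2 * x * (deriv u x) ^ 2 * deriv Ψ (u x))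
      ((1 * deriv (deriv u) x + x * deriv (deriv (deriv u)) x + 2 * deriv (deriv u) x) * Ψ (u x)
        + (x * deriv (deriv u) x + 2 * deriv u x) * (deriv Ψ (u x) * deriv u x)
        - ((2 * 1 * (deriv u x) ^ 2 + 2 * x * (2 * deriv u x ^ 1 * deriv (deriv u) x)) * deriv Ψ (u x)
          + 2 * x * (deriv u x) ^ 2 * ((1 / 2) * u x * Ψ (u x) * deriv u x))) x := by
  have hu : HasDerivAt u (deriv u x) x := hu1.hasDerivAt
  have hΨu : HasDerivAt (fun x => Ψ (u x)) (deriv Ψ (u x) * deriv u x) x :=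
    (hΨ1 (u x)).hasDerivAt.comp x hu
  have hΨ'u : HasDerivAt (fun x => deriv Ψ (u x)) ((1 / 2) * u x * Ψ (u x) * deriv u x) x := by
    have := (hΨ2 (u x)).hasDerivAt.comp x hu
    rwa [hairy] at this
  have h1 : HasDerivAt (fun x => x * deriv (deriv u) x + 2 * deriv u x)
      (1 * deriv (deriv u) x + x * deriv (deriv (deriv u)) x + 2 * deriv (deriv u) x) x := by
    exact ((hasDerivAt_id x).mul hu3.hasDerivAt).add (hu2.hasDerivAt.const_mul 2)
  have h2 : HasDerivAt (fun x => 2 * x * (deriv u x) ^ 2)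
      (2 * 1 * (deriv u x) ^ 2 + 2 * x * (2 * deriv u x ^ 1 * deriv (deriv u) x)) x := by
    exact ((hasDerivAt_id x).const_mul 2).mul (hu2.hasDerivAt.pow 2)
  exact (h1.mul hΨu).sub (h2.mul hΨ'u)

theorem first_integrals_exampleI (a b : ℝ) (u Ψ₁ Ψ₂ : ℝ → ℝ)
    (hu1 : ∀ x ∈ Set.Ioo a b, DifferentiableAt ℝ u x)
    (hu2 : ∀ x ∈ Set.Ioo a b, DifferentiableAt ℝ (deriv u) x)
    (hu3 : ∀ x ∈ Set.Ioo a b, DifferentiableAt ℝ (deriv (deriv u)) x)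
    (hu' : ∀ x ∈ Set.Ioo a b, deriv u x ≠ 0)
    (hode : ∀ x ∈ Set.Ioo a b,
      2 * deriv u x * deriv (deriv (deriv u)) x - 3 * (deriv (deriv u) x) ^ 2
        - 2 * u x * (deriv u x) ^ 4 = 0)
    (hΨ₁1 : ∀ y : ℝ, DifferentiableAt ℝ Ψ₁ y)
    (hΨ₁2 : ∀ y : ℝ, DifferentiableAt ℝ (deriv Ψ₁) y)
    (hairy₁ : ∀ y : ℝ, deriv (deriv Ψ₁) y = (1 / 2) * y * Ψ₁ y)
    (hΨ₂1 : ∀ y : ℝ, DifferentiableAt ℝ Ψ₂ y)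
    (hΨ₂2 : ∀ y : ℝ, DifferentiableAt ℝ (deriv Ψ₂) y)
    (hairy₂ : ∀ y : ℝ, deriv (deriv Ψ₂) y = (1 / 2) * y * Ψ₂ y) :
    ((∀ x ∈ Set.Ioo a b,
        deriv (deriv u) x * Ψ₂ (u x) - 2 * (deriv u x) ^ 2 * deriv Ψ₂ (u x) ≠ 0) →
      ∀ x ∈ Set.Ioo a b,
        deriv (fun x =>
          (deriv (deriv u) x * Ψ₁ (u x) - 2 * (deriv u x) ^ 2 * deriv Ψ₁ (u x)) /
          (deriv (deriv u) x * Ψ₂ (u x) - 2 * (deriv u x) ^ 2 * deriv Ψ₂ (u x))) x = 0) ∧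
    ((∀ x ∈ Set.Ioo a b,
        (x * deriv (deriv u) x + 2 * deriv u x) * Ψ₂ (u x)
          - 2 * x * (deriv u x) ^ 2 * deriv Ψ₂ (u x) ≠ 0) →
      ∀ x ∈ Set.Ioo a b,
        deriv (fun x =>
          ((x * deriv (deriv u) x + 2 * deriv u x) * Ψ₁ (u x)
            - 2 * x * (deriv u x) ^ 2 * deriv Ψ₁ (u x)) /
          ((x * deriv (deriv u) x + 2 * deriv u x) * Ψ₂ (u x)
            - 2 * x * (deriv u x) ^ 2 * deriv Ψ₂ (u x))) x = 0) := by
  constructor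
  · intro hne x hx
    set c : ℝ := 3 * deriv (deriv u) x / (2 * deriv u x) with hc
    have hux := hu' x hx
    have hodex := hode x hx
    have h1 := N_deriv (hu1 x hx) (hu2 x hx) (hu3 x hx) hΨ₁1 hΨ₁2 hairy₁
    have h2 := N_deriv (hu1 x hx) (hu2 x hx) (hu3 x hx) hΨ₂1 hΨ₂2 hairy₂
    have e1 : deriv (deriv (deriv u)) x * Ψ₁ (u x)
        + deriv (deriv u) x * (deriv Ψ₁ (u x) * deriv u x)
        - (2 * (2 * deriv u x ^ 1 * deriv (deriv u) x) * deriv Ψ₁ (u x)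
          + 2 * (deriv u x) ^ 2 * ((1 / 2) * u x * Ψ₁ (u x) * deriv u x))
        = c * (deriv (deriv u) x * Ψ₁ (u x) - 2 * (deriv u x) ^ 2 * deriv Ψ₁ (u x)) := by
      rw [hc]; field_simp; linear_combination (Ψ₁ (u x)) * hodex
    have e2 : deriv (deriv (deriv u)) x * Ψ₂ (u x)
        + deriv (deriv u) x * (deriv Ψ₂ (u x) * deriv u x)
        - (2 * (2 * deriv u x ^ 1 * deriv (deriv u) x) * deriv Ψ₂ (u x)
          + 2 * (deriv u x) ^ 2 * ((1 / 2) * u x * Ψ₂ (u x) * deriv u x))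
        = c * (deriv (deriv u) x * Ψ₂ (u x) - 2 * (deriv u x) ^ 2 * deriv Ψ₂ (u x)) := by
      rw [hc]; field_simp; linear_combination (Ψ₂ (u x)) * hodex
    rw [e1] at h1; rw [e2] at h2
    exact div_deriv_zero h1 h2 (hne x hx)
  · intro hne x hx
    set c : ℝ := 3 * deriv (deriv u) x / (2 * deriv u x) with hc
    have hux := hu' x hx
    have hodex := hode x hx
    have h1 := M_deriv (hu1 x hx) (hu2 x hx) (hu3 x hx) hΨ₁1 hΨ₁2 hairy₁
    have h2 := M_deriv (hu1 x hx) (hu2 x hx) (hu3 x hx) hΨ₂1 hΨ₂2 hairy₂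
    have e1 : (1 * deriv (deriv u) x + x * deriv (deriv (deriv u)) x + 2 * deriv (deriv u) x) * Ψ₁ (u x)
        + (x * deriv (deriv u) x + 2 * deriv u x) * (deriv Ψ₁ (u x) * deriv u x)
        - ((2 * 1 * (deriv u x) ^ 2 + 2 * x * (2 * deriv u x ^ 1 * deriv (deriv u) x)) * deriv Ψ₁ (u x)
          + 2 * x * (deriv u x) ^ 2 * ((1 / 2) * u x * Ψ₁ (u x) * deriv u x))
        = c * ((x * deriv (deriv u) x + 2 * deriv u x) * Ψ₁ (u x)
            - 2 * x * (deriv u x) ^ 2 * deriv Ψ₁ (u x)) := by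
      rw [hc]; field_simp; linear_combination (x * Ψ₁ (u x)) * hodex
    have e2 : (1 * deriv (deriv u) x + x * deriv (deriv (deriv u)) x + 2 * deriv (deriv u) x) * Ψ₂ (u x)
        + (x * deriv (deriv u) x + 2 * deriv u x) * (deriv Ψ₂ (u x) * deriv u x)
        - ((2 * 1 * (deriv u x) ^ 2 + 2 * x * (2 * deriv u x ^ 1 * deriv (deriv u) x)) * deriv Ψ₂ (u x)
          + 2 * x * (deriv u x) ^ 2 * ((1 / 2) * u x * Ψ₂ (u x) * deriv u x))
        = c * ((x * deriv (deriv u) x + 2 * deriv u x) * Ψ₂ (u x)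
            - 2 * x * (deriv u x) ^ 2 * deriv Ψ₂ (u x)) := by
      rw [hc]; field_simp; linear_combination (x * Ψ₂ (u x)) * hodex
    rw [e1] at h1; rw [e2] at h2
    exact div_deriv_zero h1 h2 (hne x hx)
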